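/- arXiv:1306.6525 — 2 statements merged into one kernel-verified Lean document; each statement's English description precedes it below -/
import Mathlib

section
/- Let q ∈ [−1/35, 1], and let Φ_q be the depolarizing channel on 6×6 complex matrices, regarded as acting on matrices over ℂ³⊗ℂ². Then Φ_q is entanglement-annihilating w.r.t. the cut 3|2 if and only if q ≤ 1/4. -/
open Matrix Kronecker ComplexOrder BigOperators

namespace PaperEA

noncomputable section

/-- A matrix on a bipartite space is *separable* w.r.t. the cut `m|n` if it is a finite
sum of Kronecker products of positive semidefinite matrices. -/
def Sep {m n : Type*} [Fintype m] [Fintype n]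
    (M : Matrix (m × n) (m × n) ℂ) : Prop :=
  ∃ (k : ℕ) (σ : Fin k → Matrix m m ℂ) (τ : Fin k → Matrix n n ℂ),
    (∀ i, (σ i).PosSemidef) ∧ (∀ i, (τ i).PosSemidef) ∧ M = ∑ i, σ i ⊗ₖ τ i

/-- Density matrix: positive semidefinite with unit trace. -/
def IsDensity {m : Type*} [Fintype m] (ρ : Matrix m m ℂ) : Prop :=
  ρ.PosSemidef ∧ ρ.trace = 1

/-- A map on matrices is positive if it maps positive semidefinite matrices to
positive semidefinite matrices. -/
def IsPosMap {m n : Type*} [Fintype m] [Fintype n]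
    (Φ : Matrix m m ℂ → Matrix n n ℂ) : Prop :=
  ∀ X : Matrix m m ℂ, X.PosSemidef → (Φ X).PosSemidef

/-- Choi matrix `(Φ ⊗ Id)[|Ψ+⟩⟨Ψ+|]` of a map `Φ` from `m×m` matrices to `n×n` matrices;
its entry at `((x,k),(y,l))` is `card m⁻¹ * Φ(|k⟩⟨l|) x y`. -/
def choi {m n : Type*} [Fintype m] [DecidableEq m] [Fintype n]
    (Φ : Matrix m m ℂ → Matrix n n ℂ) : Matrix (n × m) (n × m) ℂ :=
  fun p q => (Fintype.card m : ℂ)⁻¹ * Φ (Matrix.single p.2 q.2 1) p.1 q.1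

/-- Trace-preserving map. -/
def IsTP {m n : Type*} [Fintype m] [Fintype n]
    (Φ : Matrix m m ℂ → Matrix n n ℂ) : Prop :=
  ∀ X : Matrix m m ℂ, (Φ X).trace = X.trace

/-- Completely positive map: positive semidefinite Choi matrix. -/
def IsCP {m n : Type*} [Fintype m] [DecidableEq m] [Fintype n]
    (Φ : Matrix m m ℂ → Matrix n n ℂ) : Prop :=
  (choi Φ).PosSemidef

/-- Channel: completely positive and trace-preserving. -/
def IsChannel {m n : Type*} [Fintype m] [DecidableEq m] [Fintype n]
    (Φ : Matrix m m ℂ → Matrix n n ℂ) : Prop :=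
  IsCP Φ ∧ IsTP Φ

/-- Entanglement-breaking: separable Choi matrix (output|input cut). -/
def IsEB {m n : Type*} [Fintype m] [DecidableEq m] [Fintype n]
    (Φ : Matrix m m ℂ → Matrix n n ℂ) : Prop :=
  Sep (choi Φ)

/-- Entanglement-breaking channel. -/
def IsEBChannel {m n : Type*} [Fintype m] [DecidableEq m] [Fintype n]
    (Φ : Matrix m m ℂ → Matrix n n ℂ) : Prop :=
  IsChannel Φ ∧ IsEB Φ

/-- Entanglement-annihilating map: every density matrix is sent to a matrix separable
w.r.t. the output cut `A'|B'`. -/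
def IsEA {A B A' B' : Type*} [Fintype A] [Fintype B] [Fintype A'] [Fintype B']
    (Φ : Matrix (A × B) (A × B) ℂ → Matrix (A' × B') (A' × B') ℂ) : Prop :=
  ∀ ρ : Matrix (A × B) (A × B) ℂ, IsDensity ρ → Sep (Φ ρ)

/-- Positive entanglement-annihilating map. -/
def IsPEA {A B A' B' : Type*} [Fintype A] [Fintype B] [Fintype A'] [Fintype B']
    (Φ : Matrix (A × B) (A × B) ℂ → Matrix (A' × B') (A' × B') ℂ) : Prop :=
  IsPosMap Φ ∧ IsEA Φ

/-- Block-positive (Hermitian) operator w.r.t. the cut `m|n`: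
`⟨x⊗y| ξ |x⊗y⟩ ≥ 0` for all product vectors. -/
def BlockPositive {m n : Type*} [Fintype m] [Fintype n]
    (ξ : Matrix (m × n) (m × n) ℂ) : Prop :=
  ξ.IsHermitian ∧ ∀ (x : m → ℂ) (y : n → ℂ),
    0 ≤ star (fun p : m × n => x p.1 * y p.2) ⬝ᵥ ξ *ᵥ fun p : m × n => x p.1 * y p.2

/-- Partial trace over the first tensor factor. -/
def ptrace1 {m n : Type*} [Fintype m] (Ω : Matrix (m × n) (m × n) ℂ) : Matrix n n ℂ :=
  fun k l => ∑ i : m, Ω (i, k) (i, l)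

/-- Partial transpose w.r.t. the first tensor factor. -/
def ptrans1 {m n : Type*} (ρ : Matrix (m × n) (m × n) ℂ) : Matrix (m × n) (m × n) ℂ :=
  fun p q => ρ (q.1, p.2) (p.1, q.2)

/-- Tensor product `Φ1 ⊗ Φ2` of (linear) maps on matrices. -/
def tensorMap {A B A' B' : Type*} [Fintype A] [DecidableEq A] [Fintype B] [DecidableEq B]
    [Fintype A'] [Fintype B']
    (Φ1 : Matrix A A ℂ → Matrix A' A' ℂ) (Φ2 : Matrix B B ℂ → Matrix B' B' ℂ)
    (X : Matrix (A × B) (A × B) ℂ) : Matrix (A' × B') (A' × B') ℂ :=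
  ∑ a1 : A, ∑ a2 : A, ∑ b1 : B, ∑ b2 : B,
    X (a1, b1) (a2, b2) • (Φ1 (Matrix.single a1 a2 1) ⊗ₖ Φ2 (Matrix.single b1 b2 1))

/-- Depolarizing map `Φ_q[X] = q X + (1−q) tr(X) I/d`. -/
def depolM {m : Type*} [Fintype m] [DecidableEq m] (q : ℝ)
    (X : Matrix m m ℂ) : Matrix m m ℂ :=
  (q : ℂ) • X + ((1 - q : ℝ) : ℂ) • X.trace • (Fintype.card m : ℂ)⁻¹ • (1 : Matrix m m ℂ)

def pauli1 : Matrix (Fin 2) (Fin 2) ℂ := !![0, 1; 1, 0]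
def pauli2 : Matrix (Fin 2) (Fin 2) ℂ := !![0, -Complex.I; Complex.I, 0]
def pauli3 : Matrix (Fin 2) (Fin 2) ℂ := !![1, 0; 0, -1]

/-- The unital qubit map `Υ_λ[X] = ½(tr(X) I + Σ_j λ_j tr(σ_j X) σ_j)`. -/
def Ups (l1 l2 l3 : ℝ) (X : Matrix (Fin 2) (Fin 2) ℂ) : Matrix (Fin 2) (Fin 2) ℂ :=
  (2 : ℂ)⁻¹ • (X.trace • (1 : Matrix (Fin 2) (Fin 2) ℂ)
    + (l1 : ℂ) • (pauli1 * X).trace • pauli1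
    + (l2 : ℂ) • (pauli2 * X).trace • pauli2
    + (l3 : ℂ) • (pauli3 * X).trace • pauli3)

/-- The maximally entangled unit vector `|Ψ+⟩ = d^{-1/2} Σ_i |i⟩⊗|i⟩`. -/
def maxEntVec (d : ℕ) : Fin d × Fin d → ℂ :=
  fun p => if p.1 = p.2 then ((Real.sqrt d : ℂ))⁻¹ else 0

/-- The maximally entangled state `|Ψ+⟩⟨Ψ+|`. -/
def maxEntState (d : ℕ) : Matrix (Fin d × Fin d) (Fin d × Fin d) ℂ :=
  vecMulVec (maxEntVec d) (star (maxEntVec d))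

/-- The vector `|γ⟩ = (|1⟩⊗|1⟩ + |d⟩⊗|d⟩)/√2`. -/
def gammaVec (d : ℕ) : Fin d × Fin d → ℂ :=
  fun p => if (p.1 : ℕ) = (p.2 : ℕ) ∧ ((p.1 : ℕ) = 0 ∨ (p.1 : ℕ) = d - 1)
    then ((Real.sqrt 2 : ℂ))⁻¹ else 0

/-- The state `|γ⟩⟨γ|`. -/
def gammaState (d : ℕ) : Matrix (Fin d × Fin d) (Fin d × Fin d) ℂ :=
  vecMulVec (gammaVec d) (star (gammaVec d))

end

end PaperEA

open PaperEA

variable {m n : Type*} [Fintype m] [Fintype n]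

lemma kron_conjTranspose {l m p q : Type*} (A : Matrix l m ℂ) (B : Matrix p q ℂ) :
    (A ⊗ₖ B)ᴴ = Aᴴ ⊗ₖ Bᴴ := by
  ext ⟨i,j⟩ ⟨k,l⟩
  simp [conjTranspose_apply, kroneckerMap_apply, mul_comm]

lemma psd_kron {m n : Type*} [Fintype m] [Fintype n] [DecidableEq m] [DecidableEq n]
    {σ : Matrix m m ℂ} {τ : Matrix n n ℂ} (hσ : σ.PosSemidef) (hτ : τ.PosSemidef) :
    (σ ⊗ₖ τ).PosSemidef := by
  exact hσ.kronecker hτ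

lemma psd_smul_vecMulVec {n : Type*} [Fintype n] (c : ℝ) (hc : 0 ≤ c) (v : n → ℂ) :
    (((c:ℂ) • vecMulVec v (star v))).PosSemidef := by
  refine Matrix.PosSemidef.of_dotProduct_mulVec_nonneg ?_ ?_
  · ext p q
    simp [conjTranspose_apply, vecMulVec_apply, Complex.conj_ofReal, mul_comm]
  · intro x
    have key : star x ⬝ᵥ ((c:ℂ) • vecMulVec v (star v)) *ᵥ x
        = (c:ℂ) * ((star v ⬝ᵥ x) * (starRingEnd ℂ) (star v ⬝ᵥ x)) := by
      simp only [dotProduct, mulVec, vecMulVec_apply, Matrix.smul_apply, Pi.star_apply,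
        smul_eq_mul, starRingEnd_apply, star_sum]
      simp only [Finset.mul_sum, Finset.sum_mul]
      refine Finset.sum_congr rfl fun p _ => Finset.sum_congr rfl fun q _ => ?_
      simp only [star_mul', star_star]
      ring
    rw [key, Complex.mul_conj, ← Complex.ofReal_mul]
    exact Complex.zero_le_real.mpr (mul_nonneg hc (Complex.normSq_nonneg _))

lemma psd_smul {k : Type*} [Fintype k] {M : Matrix k k ℂ} (hM : M.PosSemidef)
    (c : ℝ) (hc : 0 ≤ c) : ((c:ℂ) • M).PosSemidef := by
  refine Matrix.PosSemidef.of_dotProduct_mulVec_nonneg ?_ (fun x => ?_)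
  · unfold Matrix.IsHermitian
    rw [conjTranspose_smul, hM.1]
    congr 1
    simp [Complex.conj_ofReal]
  · rw [smul_mulVec, dotProduct_smul, smul_eq_mul]
    exact mul_nonneg (Complex.zero_le_real.mpr hc) (hM.dotProduct_mulVec_nonneg x)

lemma sep_zero : Sep (0 : Matrix (m × n) (m × n) ℂ) :=
  ⟨0, fun i => i.elim0, fun i => i.elim0, fun i => i.elim0, fun i => i.elim0, by simp⟩

lemma sep_add {M N : Matrix (m × n) (m × n) ℂ} (hM : Sep M) (hN : Sep N) : Sep (M + N) := by
  obtain ⟨k, σ, τ, hσ, hτ, rfl⟩ := hM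
  obtain ⟨l, σ', τ', hσ', hτ', rfl⟩ := hN
  refine ⟨k + l, Fin.append σ σ', Fin.append τ τ', fun i => ?_, fun i => ?_, ?_⟩
  · refine Fin.addCases (fun i => ?_) (fun i => ?_) i
    · rw [Fin.append_left]; exact hσ i
    · rw [Fin.append_right]; exact hσ' i
  · refine Fin.addCases (fun i => ?_) (fun i => ?_) i
    · rw [Fin.append_left]; exact hτ i
    · rw [Fin.append_right]; exact hτ' i
  · rw [Fin.sum_univ_add]
    simp [Fin.append_left, Fin.append_right]

lemma sep_single {σ : Matrix m m ℂ} {τ : Matrix n n ℂ} (hσ : σ.PosSemidef)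
    (hτ : τ.PosSemidef) : Sep (σ ⊗ₖ τ) :=
  ⟨1, ![σ], ![τ], fun i => by fin_cases i <;> simpa, fun i => by fin_cases i <;> simpa, by simp⟩

lemma sep_smul {M : Matrix (m × n) (m × n) ℂ} (hM : Sep M) (c : ℝ) (hc : 0 ≤ c) :
    Sep ((c:ℂ) • M) := by
  obtain ⟨k, σ, τ, hσ, hτ, rfl⟩ := hM
  refine ⟨k, fun i => (c:ℂ) • σ i, τ, fun i => psd_smul (hσ i) c hc, hτ, ?_⟩
  rw [Finset.smul_sum]
  refine Finset.sum_congr rfl fun i _ => ?_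
  ext ⟨p,p'⟩ ⟨r,r'⟩
  simp [kroneckerMap_apply]
  ring

lemma sep_sum {ι : Type*} [Fintype ι] (f : ι → Matrix (m × n) (m × n) ℂ)
    (h : ∀ i, Sep (f i)) : Sep (∑ i, f i) :=
  Finset.sum_induction f Sep (fun _ _ => sep_add) sep_zero (fun i _ => h i)

lemma psd_vecMulVec {n : Type*} [Fintype n] (v : n → ℂ) :
    (vecMulVec v (star v)).PosSemidef := by
  simpa using psd_smul_vecMulVec 1 zero_le_one v

lemma vmv_mul_vmv {n : Type*} [Fintype n] (x y z w : n → ℂ) :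
    vecMulVec x (star y) * vecMulVec z (star w)
      = (star y ⬝ᵥ z) • vecMulVec x (star w) := by
  ext p r
  simp only [Matrix.mul_apply, vecMulVec_apply, Pi.star_apply, Matrix.smul_apply,
    dotProduct, smul_eq_mul, Finset.sum_mul, Finset.mul_sum]
  refine Finset.sum_congr rfl fun t _ => by ring

lemma trace_vmv {n : Type*} [Fintype n] (ψ : n → ℂ) :
    (vecMulVec ψ (star ψ)).trace = star ψ ⬝ᵥ ψ := by
  simp [Matrix.trace, Matrix.diag, vecMulVec_apply, dotProduct, mul_comm]

lemma psd_one_sub_vmv {n : Type*} [Fintype n] [DecidableEq n] (u : n → ℂ)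
    (hu : star u ⬝ᵥ u = 1) : ((1 : Matrix n n ℂ) - vecMulVec u (star u)).PosSemidef := by
  set R := vecMulVec u (star u) with hR
  have hRH : Rᴴ = R := (psd_vecMulVec u).1
  have hmul : (1 - R) * (1 - R) = 1 - R := by
    rw [mul_sub, sub_mul, sub_mul, hR, vmv_mul_vmv, hu, one_smul]
    simp
  rw [show (1 : Matrix n n ℂ) - R = (1 - R)ᴴ * (1 - R) by
    rw [conjTranspose_sub, conjTranspose_one, hRH, hmul]]
  exact Matrix.posSemidef_conjTranspose_mul_self _

lemma sep_depol_prod (q : ℝ) (hq1 : -(1/5:ℝ) ≤ q) (hq2 : q ≤ 1)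
    (u : Fin 3 → ℂ) (v : Fin 2 → ℂ) (hu : star u ⬝ᵥ u = 1) (hv : star v ⬝ᵥ v = 1)
    (ψ : Fin 3 × Fin 2 → ℂ) (hψ : ∀ i j, ψ (i,j) = u i * v j)
    (hunit : star ψ ⬝ᵥ ψ = 1) :
    Sep (depolM q (vecMulVec ψ (star ψ))) := by
  set R := vecMulVec u (star u) with hRdef
  set S := vecMulVec v (star v) with hSdef
  have key : depolM q (vecMulVec ψ (star ψ))
      = (((q+(1-q)/6 : ℝ)):ℂ) • (R ⊗ₖ S) + (((1-q)/6 : ℝ):ℂ) • (R ⊗ₖ (1 - S))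
        + (((1-q)/6 : ℝ):ℂ) • ((1 - R) ⊗ₖ (1 : Matrix (Fin 2) (Fin 2) ℂ)) := by
    unfold depolM
    rw [trace_vmv, hunit]
    ext ⟨i,j⟩ ⟨i',j'⟩
    simp only [Matrix.add_apply, Matrix.smul_apply, Matrix.sub_apply, Matrix.one_apply,
      kroneckerMap_apply, vecMulVec_apply, Pi.star_apply, smul_eq_mul, hRdef, hSdef,
      hψ, Fintype.card_prod, Fintype.card_fin, star_mul']
    by_cases hi : i = i' <;> by_cases hj : j = j' <;>
      simp [hi, hj, Prod.ext_iff] <;> push_cast <;> ring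
  rw [key]
  have h0 : (0:ℝ) ≤ (1-q)/6 := by linarith
  exact sep_add (sep_add
    (sep_smul (sep_single (psd_vecMulVec u) (psd_vecMulVec v)) _ (by linarith))
    (sep_smul (sep_single (psd_vecMulVec u) (psd_one_sub_vmv v hv)) _ h0))
    (sep_smul (sep_single (psd_one_sub_vmv u hu) Matrix.PosSemidef.one) _ h0)

lemma psd_perp {u1 u2 : Fin 3 → ℂ} (hu11 : star u1 ⬝ᵥ u1 = 1) (hu22 : star u2 ⬝ᵥ u2 = 1)
    (hu12 : star u1 ⬝ᵥ u2 = 0) (hu21 : star u2 ⬝ᵥ u1 = 0) :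
    ((1 : Matrix (Fin 3) (Fin 3) ℂ) - vecMulVec u1 (star u1) - vecMulVec u2 (star u2)).PosSemidef := by
  set P := (1 : Matrix (Fin 3) (Fin 3) ℂ) - vecMulVec u1 (star u1) - vecMulVec u2 (star u2) with hP
  have hPH : Pᴴ = P := by
    rw [hP, conjTranspose_sub, conjTranspose_sub, conjTranspose_one,
      (psd_vecMulVec u1).1, (psd_vecMulVec u2).1]
  have hmul : P * P = P := by
    rw [hP]
    simp only [mul_sub, sub_mul, one_mul, mul_one, vmv_mul_vmv, hu11, hu22, hu12, hu21,
      one_smul, zero_smul]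
    abel
  rw [show P = Pᴴ * P by rw [hPH, hmul]]
  exact Matrix.posSemidef_conjTranspose_mul_self _

lemma sep_depol_core (q r s a b : ℝ) (hr : 0 ≤ r) (hs2 : s^2 = 1) (hsr : s * r = q)
    (h0 : 0 ≤ (1-q)/6) (hc11 : 0 ≤ (1-q)/6 + q*a^2 - r/2) (hc22 : 0 ≤ (1-q)/6 + q*b^2 - r/2)
    (hc12 : 0 ≤ (1-q)/6 - r/2) (hab : a^2 + b^2 = 1)
    (u1 u2 : Fin 3 → ℂ) (v1 v2 : Fin 2 → ℂ)
    (hu11 : star u1 ⬝ᵥ u1 = 1) (hu22 : star u2 ⬝ᵥ u2 = 1)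
    (hu12 : star u1 ⬝ᵥ u2 = 0) (hu21 : star u2 ⬝ᵥ u1 = 0)
    (hvcomp : ∀ j j' : Fin 2, v1 j * star (v1 j') + v2 j * star (v2 j')
      = (1 : Matrix (Fin 2) (Fin 2) ℂ) j j')
    (ψ : Fin 3 × Fin 2 → ℂ)
    (hψ : ∀ i j, ψ (i,j) = (a:ℂ) * u1 i * v1 j + (b:ℂ) * u2 i * v2 j)
    (hunit : star ψ ⬝ᵥ ψ = 1) :
    Sep (depolM q (vecMulVec ψ (star ψ))) := by
  set ωl : Fin 4 → ℂ := ![1, Complex.I, -1, -Complex.I] with hωl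
  set xv : Fin 2 → Fin 4 → (Fin 3 → ℂ) := fun t o i =>
    (if t = 0 then (a:ℂ) else b) * u1 i + ωl o * ((if t = 0 then (b:ℂ) else a) * u2 i) with hxv
  set yv : Fin 4 → (Fin 2 → ℂ) := fun o j => v1 j + (s:ℂ) * (star (ωl o) * v2 j) with hyv
  have key : depolM q (vecMulVec ψ (star ψ))
      = (∑ t : Fin 2, ∑ o : Fin 4, ((r/8:ℝ):ℂ) •
          (vecMulVec (xv t o) (star (xv t o)) ⊗ₖ vecMulVec (yv o) (star (yv o))))
        + ((((1-q)/6 + q*a^2 - r/2 : ℝ)):ℂ) • (vecMulVec u1 (star u1) ⊗ₖ vecMulVec v1 (star v1))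
        + ((((1-q)/6 - r/2 : ℝ)):ℂ) • (vecMulVec u1 (star u1) ⊗ₖ vecMulVec v2 (star v2))
        + ((((1-q)/6 - r/2 : ℝ)):ℂ) • (vecMulVec u2 (star u2) ⊗ₖ vecMulVec v1 (star v1))
        + ((((1-q)/6 + q*b^2 - r/2 : ℝ)):ℂ) • (vecMulVec u2 (star u2) ⊗ₖ vecMulVec v2 (star v2))
        + (((1-q)/6 : ℝ):ℂ) • (((1 : Matrix (Fin 3) (Fin 3) ℂ) - vecMulVec u1 (star u1)
            - vecMulVec u2 (star u2)) ⊗ₖ (1 : Matrix (Fin 2) (Fin 2) ℂ)) := by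
    unfold depolM
    rw [trace_vmv, hunit]
    have hs2' : (s:ℂ)^2 = 1 := by exact_mod_cast congrArg (Complex.ofReal) hs2
    have hsr' : (s:ℂ) * r = q := by exact_mod_cast congrArg (Complex.ofReal) hsr
    have hab' : (a:ℂ)^2 + (b:ℂ)^2 = 1 := by exact_mod_cast congrArg (Complex.ofReal) hab
    ext ⟨i,j⟩ ⟨i',j'⟩
    have hvc := hvcomp j j'
    simp only [Matrix.one_apply] at hvc
    simp only [← starRingEnd_apply] at hvc
    simp only [Matrix.add_apply, Matrix.smul_apply, Matrix.sub_apply, Matrix.one_apply,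
      Matrix.sum_apply, kroneckerMap_apply, vecMulVec_apply, Pi.star_apply, smul_eq_mul,
      hψ, Fintype.card_prod, Fintype.card_fin, Fin.sum_univ_two, Fin.sum_univ_four,
      hxv, hyv, hωl, Matrix.cons_val_zero, Matrix.cons_val_one, Matrix.head_cons,
      star_add, star_mul', star_one, star_neg, Complex.conj_I, Complex.conj_ofReal,
      star_star, Prod.mk.injEq, if_true, Fin.isValue, Matrix.cons_val_fin_one,
      Matrix.head_fin_const, Matrix.cons_val_two, Matrix.cons_val_three, Matrix.tail_cons]
    norm_num
    by_cases hi : i = i' <;> by_cases hj : j = j'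
    · simp only [hi, hj, and_self, eq_self_iff_true, if_true, ite_true] at hvc ⊢
      linear_combination ((-1/6:ℂ) * u2 i' * (starRingEnd ℂ) (u2 i') + (-1/6:ℂ) * u1 i' * (starRingEnd ℂ) (u1 i') + (1/6:ℂ) * (r:ℂ) * (s:ℂ) * u2 i' * (starRingEnd ℂ) (u2 i') + (1/6:ℂ) * (r:ℂ) * (s:ℂ) * u1 i' * (starRingEnd ℂ) (u1 i')) * hvc + ((-1/2:ℂ) * (r:ℂ) * u2 i' * (starRingEnd ℂ) (u2 i') * v2 j' * (starRingEnd ℂ) (v2 j') + (-1/2:ℂ) * (r:ℂ) * u2 i' * (starRingEnd ℂ) (u2 i') * v1 j' * (starRingEnd ℂ) (v1 j') + (-1/2:ℂ) * (r:ℂ) * u1 i' * (starRingEnd ℂ) (u1 i') * v2 j' * (starRingEnd ℂ) (v2 j') + (-1/2:ℂ) * (r:ℂ) * u1 i' * (starRingEnd ℂ) (u1 i') * v1 j' * (starRingEnd ℂ) (v1 j')) * hab' + ((1/6:ℂ) * u2 i' * (starRingEnd ℂ) (u2 i') + (-1/6:ℂ) * u2 i' * (starRingEnd ℂ) (u2 i')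 * v2 j' * (starRingEnd ℂ) (v2 j') + (-1/6:ℂ) * u2 i' * (starRingEnd ℂ) (u2 i') * v1 j' * (starRingEnd ℂ) (v1 j') + (1/6:ℂ) * u1 i' * (starRingEnd ℂ) (u1 i') + (-1/6:ℂ) * u1 i' * (starRingEnd ℂ) (u1 i') * v2 j' * (starRingEnd ℂ) (v2 j') + (-1/6:ℂ) * u1 i' * (starRingEnd ℂ) (u1 i') * v1 j' * (starRingEnd ℂ) (v1 j') + (-1:ℂ) * (a:ℂ) * (b:ℂ) * u2 i' * (starRingEnd ℂ) (u1 i') * v2 j' * (starRingEnd ℂ) (v1 j') + (-1:ℂ) * (a:ℂ) * (b:ℂ) * u1 i' * (starRingEnd ℂ) (u2 i') * v1 j' * (starRingEnd ℂ) (v2 j')) * hsr' + ((-1/2:ℂ) * (b:ℂ) * (b:ℂ) * (r:ℂ) * u2 i' * (starRingEnd ℂ) (u2 i') * v2 j' * (starRingEnd ℂ) (v2 j') + (-1/2:ℂ) * (b:ℂ) * (b:ℂ) * (r:ℂ) * u1 i' * (starRingEnd ℂ) (u1 i') * v2 j' * (starRingEnd ℂ) (v2 j') + (-1/2:ℂ)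 * (a:ℂ) * (a:ℂ) * (r:ℂ) * u2 i' * (starRingEnd ℂ) (u2 i') * v2 j' * (starRingEnd ℂ) (v2 j') + (-1/2:ℂ) * (a:ℂ) * (a:ℂ) * (r:ℂ) * u1 i' * (starRingEnd ℂ) (u1 i') * v2 j' * (starRingEnd ℂ) (v2 j')) * hs2' + ((1/4:ℂ) * (b:ℂ) * (b:ℂ) * (r:ℂ) * u2 i' * (starRingEnd ℂ) (u2 i') * v1 j' * (starRingEnd ℂ) (v1 j') + (1/4:ℂ) * (b:ℂ) * (b:ℂ) * (r:ℂ) * (s:ℂ) * (s:ℂ) * u2 i' * (starRingEnd ℂ) (u2 i') * v2 j' * (starRingEnd ℂ) (v2 j') + (1/4:ℂ) * (b:ℂ) * (b:ℂ) * (r:ℂ) * (s:ℂ) * (s:ℂ) * u1 i' * (starRingEnd ℂ) (u1 i') * v2 j' * (starRingEnd ℂ) (v2 j') + (-1/4:ℂ) * (b:ℂ) * (b:ℂ) * (r:ℂ) * (s:ℂ) * (s:ℂ) * Complex.I * Complex.I * u2 i' * (starRingEnd ℂ) (u2 i') * v2 j' * (starRingEnd ℂ) (v2 j') + (1/2:ℂ)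 * (a:ℂ) * (b:ℂ) * (r:ℂ) * (s:ℂ) * u2 i' * (starRingEnd ℂ) (u1 i') * v2 j' * (starRingEnd ℂ) (v1 j') + (-1/2:ℂ) * (a:ℂ) * (b:ℂ) * (r:ℂ) * (s:ℂ) * u2 i' * (starRingEnd ℂ) (u1 i') * v1 j' * (starRingEnd ℂ) (v2 j') + (-1/2:ℂ) * (a:ℂ) * (b:ℂ) * (r:ℂ) * (s:ℂ) * u1 i' * (starRingEnd ℂ) (u2 i') * v2 j' * (starRingEnd ℂ) (v1 j') + (1/2:ℂ) * (a:ℂ) * (b:ℂ) * (r:ℂ) * (s:ℂ) * u1 i' * (starRingEnd ℂ) (u2 i') * v1 j' * (starRingEnd ℂ) (v2 j') + (1/4:ℂ) * (a:ℂ) * (a:ℂ) * (r:ℂ) * u2 i' * (starRingEnd ℂ) (u2 i') * v1 j' * (starRingEnd ℂ) (v1 j') + (1/4:ℂ) * (a:ℂ) * (a:ℂ) * (r:ℂ) * (s:ℂ) * (s:ℂ) * u2 i' * (starRingEnd ℂ) (u2 i') * v2 j' * (starRingEnd ℂ) (v2 j') + (1/4:ℂ) * (a:ℂ) * (a:ℂ)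 * (r:ℂ) * (s:ℂ) * (s:ℂ) * u1 i' * (starRingEnd ℂ) (u1 i') * v2 j' * (starRingEnd ℂ) (v2 j') + (-1/4:ℂ) * (a:ℂ) * (a:ℂ) * (r:ℂ) * (s:ℂ) * (s:ℂ) * Complex.I * Complex.I * u2 i' * (starRingEnd ℂ) (u2 i') * v2 j' * (starRingEnd ℂ) (v2 j')) * Complex.I_sq
    · simp only [hi, hj, and_false, eq_self_iff_true, if_true, if_false, ite_false, ite_true] at hvc ⊢
      linear_combination ((-1/6:ℂ) * u2 i' * (starRingEnd ℂ) (u2 i') + (-1/6:ℂ) * u1 i' * (starRingEnd ℂ) (u1 i') + (1/6:ℂ) * (r:ℂ) * (s:ℂ) * u2 i' * (starRingEnd ℂ) (u2 i') + (1/6:ℂ) * (r:ℂ) * (s:ℂ) * u1 i' * (starRingEnd ℂ) (u1 i')) * hvc + ((-1/2:ℂ) * (r:ℂ) * u2 i' * (starRingEnd ℂ) (u2 i') * v2 j * (starRingEnd ℂ) (v2 j') + (-1/2:ℂ) * (r:ℂ) * u2 i' * (starRingEnd ℂ) (u2 i') * v1 j * (starRingEnd ℂ) (v1 j') + (-1/2:ℂ)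 * (r:ℂ) * u1 i' * (starRingEnd ℂ) (u1 i') * v2 j * (starRingEnd ℂ) (v2 j') + (-1/2:ℂ) * (r:ℂ) * u1 i' * (starRingEnd ℂ) (u1 i') * v1 j * (starRingEnd ℂ) (v1 j')) * hab' + ((-1/6:ℂ) * u2 i' * (starRingEnd ℂ) (u2 i') * v2 j * (starRingEnd ℂ) (v2 j') + (-1/6:ℂ) * u2 i' * (starRingEnd ℂ) (u2 i') * v1 j * (starRingEnd ℂ) (v1 j') + (-1/6:ℂ) * u1 i' * (starRingEnd ℂ) (u1 i') * v2 j * (starRingEnd ℂ) (v2 j') + (-1/6:ℂ) * u1 i' * (starRingEnd ℂ) (u1 i') * v1 j * (starRingEnd ℂ) (v1 j') + (-1:ℂ) * (a:ℂ) * (b:ℂ) * u2 i' * (starRingEnd ℂ) (u1 i') * v2 j * (starRingEnd ℂ) (v1 j') + (-1:ℂ) * (a:ℂ) * (b:ℂ) * u1 i' * (starRingEnd ℂ) (u2 i') * v1 j * (starRingEnd ℂ) (v2 j')) * hsr' + ((-1/2:ℂ) * (b:ℂ) * (b:ℂ) * (r:ℂ) * u2 i' * (starRingEnd ℂ) (u2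 i') * v2 j * (starRingEnd ℂ) (v2 j') + (-1/2:ℂ) * (b:ℂ) * (b:ℂ) * (r:ℂ) * u1 i' * (starRingEnd ℂ) (u1 i') * v2 j * (starRingEnd ℂ) (v2 j') + (-1/2:ℂ) * (a:ℂ) * (a:ℂ) * (r:ℂ) * u2 i' * (starRingEnd ℂ) (u2 i') * v2 j * (starRingEnd ℂ) (v2 j') + (-1/2:ℂ) * (a:ℂ) * (a:ℂ) * (r:ℂ) * u1 i' * (starRingEnd ℂ) (u1 i') * v2 j * (starRingEnd ℂ) (v2 j')) * hs2' + ((1/4:ℂ) * (b:ℂ) * (b:ℂ) * (r:ℂ) * u2 i' * (starRingEnd ℂ) (u2 i') * v1 j * (starRingEnd ℂ) (v1 j') + (1/4:ℂ) * (b:ℂ) * (b:ℂ) * (r:ℂ) * (s:ℂ) * (s:ℂ) * u2 i' * (starRingEnd ℂ) (u2 i') * v2 j * (starRingEnd ℂ) (v2 j') + (1/4:ℂ) * (b:ℂ) * (b:ℂ) * (r:ℂ) * (s:ℂ) * (s:ℂ) * u1 i' * (starRingEnd ℂ) (u1 i') * v2 j * (starRingEnd ℂ) (v2 j') + (-1/4:ℂ)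 * (b:ℂ) * (b:ℂ) * (r:ℂ) * (s:ℂ) * (s:ℂ) * Complex.I * Complex.I * u2 i' * (starRingEnd ℂ) (u2 i') * v2 j * (starRingEnd ℂ) (v2 j') + (1/2:ℂ) * (a:ℂ) * (b:ℂ) * (r:ℂ) * (s:ℂ) * u2 i' * (starRingEnd ℂ) (u1 i') * v2 j * (starRingEnd ℂ) (v1 j') + (-1/2:ℂ) * (a:ℂ) * (b:ℂ) * (r:ℂ) * (s:ℂ) * u2 i' * (starRingEnd ℂ) (u1 i') * v1 j * (starRingEnd ℂ) (v2 j') + (-1/2:ℂ) * (a:ℂ) * (b:ℂ) * (r:ℂ) * (s:ℂ) * u1 i' * (starRingEnd ℂ) (u2 i') * v2 j * (starRingEnd ℂ) (v1 j') + (1/2:ℂ) * (a:ℂ) * (b:ℂ) * (r:ℂ) * (s:ℂ) * u1 i' * (starRingEnd ℂ) (u2 i') * v1 j * (starRingEnd ℂ) (v2 j') + (1/4:ℂ) * (a:ℂ) * (a:ℂ) * (r:ℂ) * u2 i' * (starRingEnd ℂ) (u2 i') * v1 j * (starRingEnd ℂ) (v1 j') + (1/4:ℂ) * (a:ℂ)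 * (a:ℂ) * (r:ℂ) * (s:ℂ) * (s:ℂ) * u2 i' * (starRingEnd ℂ) (u2 i') * v2 j * (starRingEnd ℂ) (v2 j') + (1/4:ℂ) * (a:ℂ) * (a:ℂ) * (r:ℂ) * (s:ℂ) * (s:ℂ) * u1 i' * (starRingEnd ℂ) (u1 i') * v2 j * (starRingEnd ℂ) (v2 j') + (-1/4:ℂ) * (a:ℂ) * (a:ℂ) * (r:ℂ) * (s:ℂ) * (s:ℂ) * Complex.I * Complex.I * u2 i' * (starRingEnd ℂ) (u2 i') * v2 j * (starRingEnd ℂ) (v2 j')) * Complex.I_sq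
    · simp only [hi, hj, false_and, and_true, eq_self_iff_true, if_true, if_false, ite_false, ite_true] at hvc ⊢
      linear_combination ((-1/6:ℂ) * u2 i * (starRingEnd ℂ) (u2 i') + (-1/6:ℂ) * u1 i * (starRingEnd ℂ) (u1 i') + (1/6:ℂ) * (r:ℂ) * (s:ℂ) * u2 i * (starRingEnd ℂ) (u2 i') + (1/6:ℂ) * (r:ℂ) * (s:ℂ) * u1 i * (starRingEnd ℂ) (u1 i')) * hvc + ((-1/2:ℂ) * (r:ℂ) * u2 i * (starRingEnd ℂ) (u2 i') * v2 j' * (starRingEnd ℂ) (v2 j') + (-1/2:ℂ) * (r:ℂ) * u2 i * (starRingEnd ℂ) (u2 i') * v1 j' * (starRingEnd ℂ) (v1 j') + (-1/2:ℂ) * (r:ℂ) * u1 i * (starRingEnd ℂ) (u1 i') * v2 j' * (starRingEnd ℂ) (v2 j') + (-1/2:ℂ) * (r:ℂ) * u1 i * (starRingEnd ℂ) (u1 i') * v1 j' * (starRingEnd ℂ) (v1 j')) * hab' + ((1/6:ℂ) * u2 i * (starRingEnd ℂ) (u2 i') + (-1/6:ℂ) * u2 i * (starRingEnd ℂ) (u2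 i') * v2 j' * (starRingEnd ℂ) (v2 j') + (-1/6:ℂ) * u2 i * (starRingEnd ℂ) (u2 i') * v1 j' * (starRingEnd ℂ) (v1 j') + (1/6:ℂ) * u1 i * (starRingEnd ℂ) (u1 i') + (-1/6:ℂ) * u1 i * (starRingEnd ℂ) (u1 i') * v2 j' * (starRingEnd ℂ) (v2 j') + (-1/6:ℂ) * u1 i * (starRingEnd ℂ) (u1 i') * v1 j' * (starRingEnd ℂ) (v1 j') + (-1:ℂ) * (a:ℂ) * (b:ℂ) * u2 i * (starRingEnd ℂ) (u1 i') * v2 j' * (starRingEnd ℂ) (v1 j') + (-1:ℂ) * (a:ℂ) * (b:ℂ) * u1 i * (starRingEnd ℂ) (u2 i') * v1 j' * (starRingEnd ℂ) (v2 j')) * hsr' + ((-1/2:ℂ) * (b:ℂ) * (b:ℂ) * (r:ℂ) * u2 i * (starRingEnd ℂ) (u2 i') * v2 j' * (starRingEnd ℂ) (v2 j') + (-1/2:ℂ) * (b:ℂ) * (b:ℂ) * (r:ℂ) * u1 i * (starRingEnd ℂ) (u1 i') * v2 j' * (starRingEnd ℂ) (v2 j') + (-1/2:ℂ) * (a:ℂ)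 * (a:ℂ) * (r:ℂ) * u2 i * (starRingEnd ℂ) (u2 i') * v2 j' * (starRingEnd ℂ) (v2 j') + (-1/2:ℂ) * (a:ℂ) * (a:ℂ) * (r:ℂ) * u1 i * (starRingEnd ℂ) (u1 i') * v2 j' * (starRingEnd ℂ) (v2 j')) * hs2' + ((1/4:ℂ) * (b:ℂ) * (b:ℂ) * (r:ℂ) * u2 i * (starRingEnd ℂ) (u2 i') * v1 j' * (starRingEnd ℂ) (v1 j') + (1/4:ℂ) * (b:ℂ) * (b:ℂ) * (r:ℂ) * (s:ℂ) * (s:ℂ) * u2 i * (starRingEnd ℂ) (u2 i') * v2 j' * (starRingEnd ℂ) (v2 j') + (1/4:ℂ) * (b:ℂ) * (b:ℂ) * (r:ℂ) * (s:ℂ) * (s:ℂ) * u1 i * (starRingEnd ℂ) (u1 i') * v2 j' * (starRingEnd ℂ) (v2 j') + (-1/4:ℂ) * (b:ℂ) * (b:ℂ) * (r:ℂ) * (s:ℂ) * (s:ℂ) * Complex.I * Complex.I * u2 i * (starRingEnd ℂ) (u2 i') * v2 j' * (starRingEnd ℂ) (v2 j') + (1/2:ℂ) * (a:ℂ) * (b:ℂ)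 * (r:ℂ) * (s:ℂ) * u2 i * (starRingEnd ℂ) (u1 i') * v2 j' * (starRingEnd ℂ) (v1 j') + (-1/2:ℂ) * (a:ℂ) * (b:ℂ) * (r:ℂ) * (s:ℂ) * u2 i * (starRingEnd ℂ) (u1 i') * v1 j' * (starRingEnd ℂ) (v2 j') + (-1/2:ℂ) * (a:ℂ) * (b:ℂ) * (r:ℂ) * (s:ℂ) * u1 i * (starRingEnd ℂ) (u2 i') * v2 j' * (starRingEnd ℂ) (v1 j') + (1/2:ℂ) * (a:ℂ) * (b:ℂ) * (r:ℂ) * (s:ℂ) * u1 i * (starRingEnd ℂ) (u2 i') * v1 j' * (starRingEnd ℂ) (v2 j') + (1/4:ℂ) * (a:ℂ) * (a:ℂ) * (r:ℂ) * u2 i * (starRingEnd ℂ) (u2 i') * v1 j' * (starRingEnd ℂ) (v1 j') + (1/4:ℂ) * (a:ℂ) * (a:ℂ) * (r:ℂ) * (s:ℂ) * (s:ℂ) * u2 i * (starRingEnd ℂ) (u2 i') * v2 j' * (starRingEnd ℂ) (v2 j') + (1/4:ℂ) * (a:ℂ) * (a:ℂ) * (r:ℂ) * (s:ℂ) * (s:ℂ)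 * u1 i * (starRingEnd ℂ) (u1 i') * v2 j' * (starRingEnd ℂ) (v2 j') + (-1/4:ℂ) * (a:ℂ) * (a:ℂ) * (r:ℂ) * (s:ℂ) * (s:ℂ) * Complex.I * Complex.I * u2 i * (starRingEnd ℂ) (u2 i') * v2 j' * (starRingEnd ℂ) (v2 j')) * Complex.I_sq
    · simp only [hi, hj, false_and, if_false, ite_false] at hvc ⊢
      linear_combination ((-1/6:ℂ) * u2 i * (starRingEnd ℂ) (u2 i') + (-1/6:ℂ) * u1 i * (starRingEnd ℂ) (u1 i') + (1/6:ℂ) * (r:ℂ) * (s:ℂ) * u2 i * (starRingEnd ℂ) (u2 i') + (1/6:ℂ) * (r:ℂ) * (s:ℂ) * u1 i * (starRingEnd ℂ) (u1 i')) * hvc + ((-1/2:ℂ) * (r:ℂ) * u2 i * (starRingEnd ℂ) (u2 i') * v2 j * (starRingEnd ℂ) (v2 j') + (-1/2:ℂ) * (r:ℂ) * u2 i * (starRingEnd ℂ) (u2 i') * v1 j * (starRingEnd ℂ) (v1 j') + (-1/2:ℂ) * (r:ℂ) * u1 i * (starRingEnd ℂ) (u1 i') * v2 j * (starRingEnd ℂ)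 (v2 j') + (-1/2:ℂ) * (r:ℂ) * u1 i * (starRingEnd ℂ) (u1 i') * v1 j * (starRingEnd ℂ) (v1 j')) * hab' + ((-1/6:ℂ) * u2 i * (starRingEnd ℂ) (u2 i') * v2 j * (starRingEnd ℂ) (v2 j') + (-1/6:ℂ) * u2 i * (starRingEnd ℂ) (u2 i') * v1 j * (starRingEnd ℂ) (v1 j') + (-1/6:ℂ) * u1 i * (starRingEnd ℂ) (u1 i') * v2 j * (starRingEnd ℂ) (v2 j') + (-1/6:ℂ) * u1 i * (starRingEnd ℂ) (u1 i') * v1 j * (starRingEnd ℂ) (v1 j') + (-1:ℂ) * (a:ℂ) * (b:ℂ) * u2 i * (starRingEnd ℂ) (u1 i') * v2 j * (starRingEnd ℂ) (v1 j') + (-1:ℂ) * (a:ℂ) * (b:ℂ) * u1 i * (starRingEnd ℂ) (u2 i') * v1 j * (starRingEnd ℂ) (v2 j')) * hsr' + ((-1/2:ℂ) * (b:ℂ) * (b:ℂ) * (r:ℂ) * u2 i * (starRingEnd ℂ) (u2 i') * v2 j * (starRingEnd ℂ) (v2 j') + (-1/2:ℂ) * (b:ℂ) * (b:ℂ) * (r:ℂ)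 * u1 i * (starRingEnd ℂ) (u1 i') * v2 j * (starRingEnd ℂ) (v2 j') + (-1/2:ℂ) * (a:ℂ) * (a:ℂ) * (r:ℂ) * u2 i * (starRingEnd ℂ) (u2 i') * v2 j * (starRingEnd ℂ) (v2 j') + (-1/2:ℂ) * (a:ℂ) * (a:ℂ) * (r:ℂ) * u1 i * (starRingEnd ℂ) (u1 i') * v2 j * (starRingEnd ℂ) (v2 j')) * hs2' + ((1/4:ℂ) * (b:ℂ) * (b:ℂ) * (r:ℂ) * u2 i * (starRingEnd ℂ) (u2 i') * v1 j * (starRingEnd ℂ) (v1 j') + (1/4:ℂ) * (b:ℂ) * (b:ℂ) * (r:ℂ) * (s:ℂ) * (s:ℂ) * u2 i * (starRingEnd ℂ) (u2 i') * v2 j * (starRingEnd ℂ) (v2 j') + (1/4:ℂ) * (b:ℂ) * (b:ℂ) * (r:ℂ) * (s:ℂ) * (s:ℂ) * u1 i * (starRingEnd ℂ) (u1 i') * v2 j * (starRingEnd ℂ) (v2 j') + (-1/4:ℂ) * (b:ℂ) * (b:ℂ) * (r:ℂ) * (s:ℂ) * (s:ℂ) * Complex.I * Complex.I * u2 i * (starRingEnd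 ℂ) (u2 i') * v2 j * (starRingEnd ℂ) (v2 j') + (1/2:ℂ) * (a:ℂ) * (b:ℂ) * (r:ℂ) * (s:ℂ) * u2 i * (starRingEnd ℂ) (u1 i') * v2 j * (starRingEnd ℂ) (v1 j') + (-1/2:ℂ) * (a:ℂ) * (b:ℂ) * (r:ℂ) * (s:ℂ) * u2 i * (starRingEnd ℂ) (u1 i') * v1 j * (starRingEnd ℂ) (v2 j') + (-1/2:ℂ) * (a:ℂ) * (b:ℂ) * (r:ℂ) * (s:ℂ) * u1 i * (starRingEnd ℂ) (u2 i') * v2 j * (starRingEnd ℂ) (v1 j') + (1/2:ℂ) * (a:ℂ) * (b:ℂ) * (r:ℂ) * (s:ℂ) * u1 i * (starRingEnd ℂ) (u2 i') * v1 j * (starRingEnd ℂ) (v2 j') + (1/4:ℂ) * (a:ℂ) * (a:ℂ) * (r:ℂ) * u2 i * (starRingEnd ℂ) (u2 i') * v1 j * (starRingEnd ℂ) (v1 j') + (1/4:ℂ) * (a:ℂ) * (a:ℂ) * (r:ℂ) * (s:ℂ) * (s:ℂ) * u2 i * (starRingEnd ℂ) (u2 i') * v2 j * (starRingEnd ℂ)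 (v2 j') + (1/4:ℂ) * (a:ℂ) * (a:ℂ) * (r:ℂ) * (s:ℂ) * (s:ℂ) * u1 i * (starRingEnd ℂ) (u1 i') * v2 j * (starRingEnd ℂ) (v2 j') + (-1/4:ℂ) * (a:ℂ) * (a:ℂ) * (r:ℂ) * (s:ℂ) * (s:ℂ) * Complex.I * Complex.I * u2 i * (starRingEnd ℂ) (u2 i') * v2 j * (starRingEnd ℂ) (v2 j')) * Complex.I_sq
  rw [key]
  refine sep_add (sep_add (sep_add (sep_add (sep_add
    (sep_sum _ fun t => sep_sum _ fun o =>
      sep_smul (sep_single (psd_vecMulVec _) (psd_vecMulVec _)) _ (by linarith))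
    (sep_smul (sep_single (psd_vecMulVec _) (psd_vecMulVec _)) _ hc11))
    (sep_smul (sep_single (psd_vecMulVec _) (psd_vecMulVec _)) _ hc12))
    (sep_smul (sep_single (psd_vecMulVec _) (psd_vecMulVec _)) _ hc12))
    (sep_smul (sep_single (psd_vecMulVec _) (psd_vecMulVec _)) _ hc22))
    (sep_smul (sep_single (psd_perp hu11 hu22 hu12 hu21) Matrix.PosSemidef.one) _ h0)

set_option maxHeartbeats 1000000 in
lemma sep_depol_pure (q : ℝ) (hq1 : -(1/35:ℝ) ≤ q) (hq2 : q ≤ 1/4)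
    (ψ : Fin 3 × Fin 2 → ℂ) (hunit : star ψ ⬝ᵥ ψ = 1) :
    Sep (depolM q (vecMulVec ψ (star ψ))) := by
  classical
  set M : Matrix (Fin 3) (Fin 2) ℂ := Matrix.of (fun i j => ψ (i,j)) with hMdef
  have hH : (Mᴴ * M).PosSemidef := Matrix.posSemidef_conjTranspose_mul_self M
  set her := hH.1 with hherdef
  set d : Fin 2 → ℝ := her.eigenvalues with hddef
  have hd : ∀ k, 0 ≤ d k := fun k => hH.eigenvalues_nonneg k
  set V : Matrix (Fin 2) (Fin 2) ℂ := (her.eigenvectorUnitary : Matrix (Fin 2) (Fin 2) ℂ)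
    with hVdef
  have hV2 : V * star V = 1 := Matrix.mem_unitaryGroup_iff.mp (her.eigenvectorUnitary).2
  have hV1 : star V * V = 1 := Matrix.mem_unitaryGroup_iff'.mp (her.eigenvectorUnitary).2
  have hspec : Mᴴ * M = V * diagonal (RCLike.ofReal ∘ d) * star V := her.spectral_theorem
  set w : Fin 2 → Fin 3 → ℂ := fun k i => (M * V) i k with hwdef
  have hMV : (M * V)ᴴ * (M * V) = diagonal (RCLike.ofReal ∘ d) := by
    have h1 : (M * V)ᴴ * (M * V) = star V * (Mᴴ * M) * V := by
      rw [conjTranspose_mul, Matrix.star_eq_conjTranspose]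
      simp only [Matrix.mul_assoc]
    rw [h1, hspec]
    calc star V * (V * diagonal (RCLike.ofReal ∘ d) * star V) * V
        = (star V * V) * diagonal (RCLike.ofReal ∘ d) * (star V * V) := by noncomm_ring
      _ = diagonal (RCLike.ofReal ∘ d) := by rw [hV1, one_mul, mul_one]
  have hwdot : ∀ k l, star (w k) ⬝ᵥ w l = if k = l then ((d k : ℝ):ℂ) else 0 := by
    intro k l
    have : star (w k) ⬝ᵥ w l = ((M * V)ᴴ * (M * V)) k l := by
      simp only [dotProduct, Matrix.mul_apply, conjTranspose_apply, hwdef, Pi.star_apply,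
        Fin.sum_univ_two, Complex.star_def, map_add, _root_.map_mul]
    rw [this, hMV]
    simp [diagonal_apply]
  have hM : ∀ i j, M i j = w 0 i * star (V j 0) + w 1 i * star (V j 1) := by
    intro i j
    have hMVV : (M * V) * star V = M := by rw [Matrix.mul_assoc, hV2, Matrix.mul_one]
    conv_lhs => rw [← hMVV]
    simp [Matrix.mul_apply, Fin.sum_univ_two, Matrix.star_eq_conjTranspose,
      conjTranspose_apply, hwdef]
  set v1 : Fin 2 → ℂ := fun jj => star (V jj 0) with hv1def
  set v2 : Fin 2 → ℂ := fun jj => star (V jj 1) with hv2def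
  have hvcomp : ∀ j j', v1 j * star (v1 j') + v2 j * star (v2 j')
      = (1 : Matrix (Fin 2) (Fin 2) ℂ) j j' := by
    intro j j'
    have h : (V * star V) j j' = (1 : Matrix (Fin 2) (Fin 2) ℂ) j j' := by rw [hV2]
    have h2 : v1 j * star (v1 j') + v2 j * star (v2 j') = star ((V * star V) j j') := by
      simp [Matrix.mul_apply, Fin.sum_univ_two, Matrix.star_eq_conjTranspose,
        conjTranspose_apply, hv1def, hv2def, star_mul', mul_comm]
    rw [h2, h]
    simp [Matrix.one_apply, apply_ite]
  have hv1unit : star v1 ⬝ᵥ v1 = 1 := by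
    have : star v1 ⬝ᵥ v1 = (star V * V) 0 0 := by
      simp [dotProduct, Matrix.mul_apply, Matrix.star_eq_conjTranspose, conjTranspose_apply,
        hv1def, mul_comm]
    rw [this, hV1]; simp
  have hv2unit : star v2 ⬝ᵥ v2 = 1 := by
    have : star v2 ⬝ᵥ v2 = (star V * V) 1 1 := by
      simp [dotProduct, Matrix.mul_apply, Matrix.star_eq_conjTranspose, conjTranspose_apply,
        hv2def, mul_comm]
    rw [this, hV1]; simp
  have htrd : d 0 + d 1 = 1 := by
    have htr1 : (Mᴴ * M).trace = star ψ ⬝ᵥ ψ := by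
      simp only [Matrix.trace, Matrix.diag, Matrix.mul_apply, conjTranspose_apply,
        dotProduct, Fintype.sum_prod_type, Pi.star_apply, hMdef, Matrix.of_apply]
      rw [Finset.sum_comm]
    have htr2 : (Mᴴ * M).trace = ((d 0 + d 1 : ℝ) : ℂ) := by
      rw [hspec, Matrix.trace_mul_comm, ← mul_assoc, hV1, one_mul, Matrix.trace_diagonal]
      simp [Fin.sum_univ_two]
    rw [htr1, hunit] at htr2
    exact_mod_cast htr2.symm
  have hψM : ∀ i j, ψ (i, j) = w 0 i * v1 j + w 1 i * v2 j := fun i j => hM i j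
  rcases (hd 1).eq_or_lt with h1 | h1
  · -- d 1 = 0 : product case with w 0
    have hw1 : w 1 = 0 := by
      have := hwdot 1 1
      rw [if_pos rfl, ← h1] at this
      exact dotProduct_star_self_eq_zero.mp (by simpa using this)
    have hd0 : d 0 = 1 := by linarith [h1]
    have hu : star (w 0) ⬝ᵥ w 0 = 1 := by
      rw [hwdot 0 0, if_pos rfl, hd0]; norm_num
    refine sep_depol_prod q (by linarith) (by linarith) (w 0) v1 hu hv1unit ψ ?_ hunit
    intro i j
    rw [hψM i j, hw1]
    simp
  rcases (hd 0).eq_or_lt with h0 | h0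
  · -- d 0 = 0 : product case with w 1
    have hw0 : w 0 = 0 := by
      have := hwdot 0 0
      rw [if_pos rfl, ← h0] at this
      exact dotProduct_star_self_eq_zero.mp (by simpa using this)
    have hd1 : d 1 = 1 := by linarith [h0]
    have hu : star (w 1) ⬝ᵥ w 1 = 1 := by
      rw [hwdot 1 1, if_pos rfl, hd1]; norm_num
    refine sep_depol_prod q (by linarith) (by linarith) (w 1) v2 hu hv2unit ψ ?_ hunit
    intro i j
    rw [hψM i j, hw0]
    simp
  · -- both positive: Schmidt case
    set a : ℝ := Real.sqrt (d 0) with hadef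
    set b : ℝ := Real.sqrt (d 1) with hbdef
    have ha2 : a^2 = d 0 := Real.sq_sqrt (hd 0)
    have hb2 : b^2 = d 1 := Real.sq_sqrt (hd 1)
    have hapos : 0 < a := Real.sqrt_pos.mpr h0
    have hbpos : 0 < b := Real.sqrt_pos.mpr h1
    have hab : a^2 + b^2 = 1 := by rw [ha2, hb2]; exact htrd
    set u1 : Fin 3 → ℂ := fun i => ((a⁻¹:ℝ):ℂ) * w 0 i with hu1def
    set u2 : Fin 3 → ℂ := fun i => ((b⁻¹:ℝ):ℂ) * w 1 i with hu2def
    have hdot : ∀ (c c' : ℝ) (k l : Fin 2),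
        star (fun i => ((c:ℝ):ℂ) * w k i) ⬝ᵥ (fun i => ((c':ℝ):ℂ) * w l i)
          = ((c:ℂ) * (c':ℂ)) * (star (w k) ⬝ᵥ w l) := by
      intro c c' k l
      simp only [dotProduct, Pi.star_apply, star_mul', Complex.conj_ofReal, Finset.mul_sum]
      exact Finset.sum_congr rfl fun i _ => by
        simp only [Complex.star_def, Complex.conj_ofReal]; ring
    have haC : (a:ℂ) ≠ 0 := Complex.ofReal_ne_zero.mpr (ne_of_gt hapos)
    have hbC : (b:ℂ) ≠ 0 := Complex.ofReal_ne_zero.mpr (ne_of_gt hbpos)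
    have hu11 : star u1 ⬝ᵥ u1 = 1 := by
      rw [hu1def, hdot, hwdot 0 0, if_pos rfl, ← ha2]
      push_cast
      field_simp
    have hu22 : star u2 ⬝ᵥ u2 = 1 := by
      rw [hu2def, hdot, hwdot 1 1, if_pos rfl, ← hb2]
      push_cast
      field_simp
    have hu12 : star u1 ⬝ᵥ u2 = 0 := by
      rw [hu1def, hu2def, hdot, hwdot 0 1, if_neg (by norm_num)]
      ring
    have hu21 : star u2 ⬝ᵥ u1 = 0 := by
      rw [hu1def, hu2def, hdot, hwdot 1 0, if_neg (by norm_num)]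
      ring
    have hψ' : ∀ i j, ψ (i,j) = (a:ℂ) * u1 i * v1 j + (b:ℂ) * u2 i * v2 j := by
      intro i j
      rw [hψM i j, hu1def, hu2def]
      push_cast
      field_simp
    rcases le_or_gt 0 q with hqs | hqs
    · exact sep_depol_core q q 1 a b hqs (by norm_num) (one_mul q) (by linarith)
        (by nlinarith [mul_nonneg hqs (sq_nonneg a)]) (by nlinarith [mul_nonneg hqs (sq_nonneg b)])
        (by linarith) hab u1 u2 v1 v2 hu11 hu22 hu12 hu21 hvcomp ψ hψ' hunit
    · exact sep_depol_core q (-q) (-1) a b (by linarith) (by norm_num) (by ring) (by linarith)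
        (by nlinarith [mul_nonneg (neg_nonneg.mpr hqs.le) (sq_nonneg b)])
        (by nlinarith [mul_nonneg (neg_nonneg.mpr hqs.le) (sq_nonneg a)])
        (by linarith) hab u1 u2 v1 v2 hu11 hu22 hu12 hu21 hvcomp ψ hψ' hunit

set_option maxHeartbeats 1000000 in
lemma sep_depol_density (q : ℝ) (hq1 : -(1/35:ℝ) ≤ q) (hq2 : q ≤ 1/4)
    (ρ : Matrix (Fin 3 × Fin 2) (Fin 3 × Fin 2) ℂ) (hρ : IsDensity ρ) :
    Sep (depolM q ρ) := by
  classical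
  obtain ⟨hPSD, htr⟩ := hρ
  set her := hPSD.1 with hher
  set e : Fin 3 × Fin 2 → ℝ := her.eigenvalues with hedef
  have he : ∀ k, 0 ≤ e k := fun k => hPSD.eigenvalues_nonneg k
  set U : Matrix (Fin 3 × Fin 2) (Fin 3 × Fin 2) ℂ :=
    (her.eigenvectorUnitary : Matrix (Fin 3 × Fin 2) (Fin 3 × Fin 2) ℂ) with hUdef
  have hU1 : star U * U = 1 := Matrix.mem_unitaryGroup_iff'.mp (her.eigenvectorUnitary).2
  have hspec : ρ = U * diagonal (RCLike.ofReal ∘ e) * star U := her.spectral_theorem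
  set w : (Fin 3 × Fin 2) → (Fin 3 × Fin 2) → ℂ := fun k p => U p k with hwdef
  have hwunit : ∀ k, star (w k) ⬝ᵥ w k = 1 := by
    intro k
    have : star (w k) ⬝ᵥ w k = (star U * U) k k := by
      simp [dotProduct, Matrix.mul_apply, Matrix.star_eq_conjTranspose, conjTranspose_apply,
        hwdef]
    rw [this, hU1]
    simp
  set W : (Fin 3 × Fin 2) → Matrix (Fin 3 × Fin 2) (Fin 3 × Fin 2) ℂ :=
    fun k => vecMulVec (w k) (star (w k)) with hWdef
  have hdecomp : ρ = ∑ k, ((e k : ℝ):ℂ) • W k := by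
    rw [hspec]
    ext p r
    simp only [Matrix.mul_apply, Matrix.diagonal_apply, Matrix.sum_apply, Matrix.smul_apply,
      vecMulVec_apply, Pi.star_apply, Matrix.star_eq_conjTranspose, conjTranspose_apply,
      smul_eq_mul, hWdef, hwdef, Function.comp_apply, mul_ite, mul_zero, ite_mul, zero_mul,
      Finset.sum_ite_eq, Finset.mem_univ, if_true]
    exact Finset.sum_congr rfl fun k _ => by simp [Complex.star_def]; ring
  have hWtr : ∀ k, (W k).trace = 1 := fun k => by rw [hWdef, trace_vmv, hwunit k]
  have hsum_e : ∑ k, ((e k : ℝ):ℂ) = 1 := by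
    have : ρ.trace = ∑ k, ((e k : ℝ):ℂ) := by
      rw [hdecomp, Matrix.trace_sum]
      exact Finset.sum_congr rfl fun k _ => by rw [Matrix.trace_smul, hWtr k, smul_eq_mul, mul_one]
    rw [← this, htr]
  have hkey : depolM q ρ = ∑ k, ((e k : ℝ):ℂ) • depolM q (W k) := by
    unfold depolM
    rw [htr]
    have : ∀ k ∈ Finset.univ, ((e k : ℝ):ℂ) • ((q:ℂ) • W k
        + ((1-q:ℝ):ℂ) • (W k).trace • ((Fintype.card (Fin 3 × Fin 2) : ℂ))⁻¹ • (1 : Matrix (Fin 3 × Fin 2) (Fin 3 × Fin 2) ℂ))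
        = (q:ℂ) • (((e k : ℝ):ℂ) • W k)
          + ((e k : ℝ):ℂ) • ((1-q:ℝ):ℂ) • ((Fintype.card (Fin 3 × Fin 2) : ℂ))⁻¹ • (1 : Matrix (Fin 3 × Fin 2) (Fin 3 × Fin 2) ℂ) := by
      intro k _
      rw [hWtr k, one_smul, smul_add, smul_comm]
    rw [Finset.sum_congr rfl this, Finset.sum_add_distrib, ← Finset.smul_sum, ← hdecomp,
      ← Finset.sum_smul, hsum_e, one_smul, one_smul]
  rw [hkey]
  exact sep_sum _ fun k => sep_smul (sep_depol_pure q hq1 hq2 (w k) (hwunit k)) (e k) (he k)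

/-- the global depolarizing channel `Φ_q` on a qutrit-qubit system is
entanglement-annihilating w.r.t. the cut 3|2 iff `q ≤ 1/4`. -/
theorem stmt_13 (q : ℝ) (hq : q ∈ Set.Icc (-(1 / 35) : ℝ) 1) :
    IsEA (depolM (m := Fin 3 × Fin 2) q) ↔ q ≤ 1 / 4 := by
  constructor
  · intro hEA
    classical
    set ψ : Fin 3 × Fin 2 → ℂ := fun p => if p = (0,0) ∨ p = (1,1) then 1 else 0 with hψdef
    set ρ : Matrix (Fin 3 × Fin 2) (Fin 3 × Fin 2) ℂ :=
      ((2⁻¹:ℝ):ℂ) • vecMulVec ψ (star ψ) with hρdef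
    have htr : ρ.trace = 1 := by
      simp only [hρdef, Matrix.trace, Matrix.diag, Matrix.smul_apply, vecMulVec_apply,
        Pi.star_apply, hψdef]
      rw [Fintype.sum_prod_type]
      simp [Fin.sum_univ_succ, Prod.ext_iff]
      norm_num
    have hden : IsDensity ρ := ⟨psd_smul_vecMulVec _ (by norm_num) ψ, htr⟩
    obtain ⟨k, σ, τ, hσ, hτ, hsum⟩ := hEA ρ hden
    set z : Fin 3 × Fin 2 → ℂ := fun p => if p = (0,1) then 1 else if p = (1,0) then -1 else 0
      with hzdef
    have hFi : ∀ i, 0 ≤ (σ i ⊗ₖ τ i) (0,1) (0,1) + (σ i ⊗ₖ τ i) (1,0) (1,0)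
        - (σ i ⊗ₖ τ i) (1,1) (0,0) - (σ i ⊗ₖ τ i) (0,0) (1,1) := by
      intro i
      have hk := (psd_kron ((hσ i).transpose) (hτ i)).dotProduct_mulVec_nonneg z
      have : star z ⬝ᵥ ((σ i)ᵀ ⊗ₖ τ i) *ᵥ z
          = (σ i ⊗ₖ τ i) (0,1) (0,1) + (σ i ⊗ₖ τ i) (1,0) (1,0)
            - (σ i ⊗ₖ τ i) (1,1) (0,0) - (σ i ⊗ₖ τ i) (0,0) (1,1) := by
        simp only [dotProduct, mulVec, Fintype.sum_prod_type, Fin.sum_univ_succ,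
          Fin.sum_univ_two, kroneckerMap_apply, transpose_apply, hzdef, Pi.star_apply]
        norm_num [Prod.ext_iff, Fin.ext_iff]
        ring
      rwa [this] at hk
    have hF0 : 0 ≤ (depolM q ρ) (0,1) (0,1) + (depolM q ρ) (1,0) (1,0)
        - (depolM q ρ) (1,1) (0,0) - (depolM q ρ) (0,0) (1,1) := by
      rw [hsum]
      simp only [Matrix.sum_apply, ← Finset.sum_add_distrib, ← Finset.sum_sub_distrib]
      exact Finset.sum_nonneg fun i _ => hFi i
    have hval : (depolM q ρ) (0,1) (0,1) + (depolM q ρ) (1,0) (1,0)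
        - (depolM q ρ) (1,1) (0,0) - (depolM q ρ) (0,0) (1,1) = (((1-q)/3 - q : ℝ) : ℂ) := by
      simp only [depolM, htr, Matrix.add_apply, Matrix.smul_apply, Matrix.one_apply, hρdef,
        vecMulVec_apply, Pi.star_apply, hψdef]
      norm_num [Prod.ext_iff, Fintype.card_prod, dotProduct, Fintype.sum_prod_type, Fin.sum_univ_succ]
      push_cast
      ring
    rw [hval] at hF0
    have := Complex.zero_le_real.mp hF0
    linarith
  · intro hq4 ρ hρ
    exact sep_depol_density q hq.1 hq4 ρ hρ
end

section
/- Let d ≥ 2 and let |γ⟩ = (|1⟩⊗|1⟩ + |d⟩⊗|d⟩)/√2 ∈ ℂ^d⊗ℂ^d. If q ∈ ((1+√3)/(d+1+√3), 1], then the state (Φ_q ⊗ Φ_q)[|γ⟩⟨γ|], where Φ_q is the depolarizing channel on d×d complex matrices, has a non-positive-semidefinite partial transpose w.r.t. the first factor, and hence is not separable w.r.t. the cut d|d. Moreover, if q ∈ (2/(d²+2), 1], then Φ_q^{global}[|γ⟩⟨γ|], where Φ_q^{global} is the depolarizing channel on d²×d² complex matrices acting on matrices over ℂ^d⊗ℂ^d,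 has a non-positive-semidefinite partial transpose w.r.t. the first factor, and hence is not separable w.r.t. the cut d|d. -/
open Matrix Kronecker ComplexOrder BigOperators

open PaperEA


namespace StmtAux
open PaperEA

section General
variable {m n m' n' : Type*} [Fintype m] [Fintype n]

lemma kron_conjT (A : Matrix m n ℂ) (B : Matrix m' n' ℂ) :
    (A ⊗ₖ B)ᴴ = Aᴴ ⊗ₖ Bᴴ := by
  ext ⟨i,k⟩ ⟨j,l⟩
  simp [Matrix.conjTranspose_apply, mul_comm]

lemma psd_kron {A : Matrix m m ℂ} {B : Matrix n n ℂ}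
    (hA : A.PosSemidef) (hB : B.PosSemidef) : (A ⊗ₖ B).PosSemidef := by
  exact hA.kronecker hB

lemma psd_zero : (0 : Matrix m m ℂ).PosSemidef := by
  constructor
  · simp [Matrix.IsHermitian]
  · intro x; simp

lemma psd_sum {k : ℕ} (f : Fin k → Matrix m m ℂ) (h : ∀ i, (f i).PosSemidef) :
    (∑ i, f i).PosSemidef := by
  classical
  induction k with
  | zero => simpa using psd_zero
  | succ n ih =>
      rw [Fin.sum_univ_succ]
      exact (h 0).add (ih _ (fun i => h i.succ))

lemma quad_neg {k : Type*} [Fintype k] [DecidableEq k] (N : Matrix k k ℂ) (a b : k)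
    (h : ¬ (0:ℂ) ≤ N a a + N b b - N a b - N b a) : ¬ N.PosSemidef := by
  intro hN
  apply h
  have := hN.dotProduct_mulVec_nonneg (Pi.single a 1 - Pi.single b 1)
  convert this using 1
  simp [Matrix.mulVec_sub, Matrix.mulVec_single, dotProduct_sub, sub_dotProduct,
    dotProduct_single, single_dotProduct, ← Pi.single_star]
  ring

lemma ptrans1_kron (A : Matrix m m ℂ) (B : Matrix n n ℂ) :
    ptrans1 (A ⊗ₖ B) = Aᵀ ⊗ₖ B := by
  ext ⟨i,k⟩ ⟨j,l⟩
  rfl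

lemma sep_ptrans1 {M : Matrix (m × n) (m × n) ℂ} (h : Sep M) : (ptrans1 M).PosSemidef := by
  obtain ⟨k, σ, τ, hσ, hτ, rfl⟩ := h
  have : ptrans1 (∑ i, σ i ⊗ₖ τ i) = ∑ i, (σ i)ᵀ ⊗ₖ τ i := by
    ext ⟨a,b⟩ ⟨c,e⟩
    simp [ptrans1, Matrix.sum_apply]
  rw [this]
  exact psd_sum _ (fun i => psd_kron (hσ i).transpose (hτ i))

end General

section Gamma
variable {d : ℕ}

lemma gammaVec_eq (hd : 2 ≤ d) (p : Fin d × Fin d) :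
    gammaVec d p =
      if p = ((⟨0, by omega⟩ : Fin d), (⟨0, by omega⟩ : Fin d))
          ∨ p = ((⟨d-1, by omega⟩ : Fin d), (⟨d-1, by omega⟩ : Fin d))
      then ((Real.sqrt 2 : ℂ))⁻¹ else 0 := by
  unfold gammaVec
  congr 1
  simp only [eq_iff_iff, Prod.ext_iff, Fin.ext_iff]
  omega

lemma gammaState_apply (p q : Fin d × Fin d) :
    gammaState d p q = gammaVec d p * star (gammaVec d q) := rfl

lemma inv_sqrt2_sq : (((Real.sqrt 2 : ℂ))⁻¹ * star ((Real.sqrt 2 : ℂ))⁻¹ : ℂ) = 2⁻¹ := by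
  have h : (star (((Real.sqrt 2 : ℂ))⁻¹) : ℂ) = ((Real.sqrt 2 : ℂ))⁻¹ := by
    rw [← Complex.ofReal_inv, Complex.star_def, Complex.conj_ofReal]
  rw [h, ← Complex.ofReal_inv, ← Complex.ofReal_mul, ← mul_inv,
    Real.mul_self_sqrt (by norm_num : (0:ℝ) ≤ 2)]
  norm_num

lemma inv_sqrt2_sq' : (((Real.sqrt 2 : ℂ))⁻¹ * ((Real.sqrt 2 : ℂ))⁻¹ : ℂ) = 2⁻¹ := by
  rw [← Complex.ofReal_inv, ← Complex.ofReal_mul, ← mul_inv,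
    Real.mul_self_sqrt (by norm_num : (0:ℝ) ≤ 2)]
  norm_num

lemma gammaState_trace (hd : 2 ≤ d) : (gammaState d).trace = 1 := by
  classical
  unfold Matrix.trace
  rw [Finset.sum_eq_add_of_mem
      ((⟨0, by omega⟩ : Fin d), (⟨0, by omega⟩ : Fin d))
      ((⟨d-1, by omega⟩ : Fin d), (⟨d-1, by omega⟩ : Fin d))
      (Finset.mem_univ _) (Finset.mem_univ _)
      (by simp [Prod.ext_iff, Fin.ext_iff]; omega)
      (fun c _ hc => ?_)]
  · simp only [Matrix.diag_apply, gammaState_apply, gammaVec_eq hd, true_or, or_true,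
      eq_self_iff_true, if_true]
    rw [inv_sqrt2_sq]
    norm_num
  · simp only [Matrix.diag_apply, gammaState_apply, gammaVec_eq hd]
    rw [if_neg (not_or.mpr ⟨hc.1, hc.2⟩)]
    ring

end Gamma
end StmtAux


namespace StmtAux
open PaperEA

section Comp
variable {d : ℕ}

lemma gammaState_eq (hd : 2 ≤ d) :
    gammaState d = (2:ℂ)⁻¹ •
      (Matrix.single ((⟨0, by omega⟩ : Fin d), (⟨0, by omega⟩ : Fin d))
          ((⟨0, by omega⟩ : Fin d), (⟨0, by omega⟩ : Fin d)) 1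
        + Matrix.single ((⟨0, by omega⟩ : Fin d), (⟨0, by omega⟩ : Fin d))
          ((⟨d-1, by omega⟩ : Fin d), (⟨d-1, by omega⟩ : Fin d)) 1
        + Matrix.single ((⟨d-1, by omega⟩ : Fin d), (⟨d-1, by omega⟩ : Fin d))
          ((⟨0, by omega⟩ : Fin d), (⟨0, by omega⟩ : Fin d)) 1
        + Matrix.single ((⟨d-1, by omega⟩ : Fin d), (⟨d-1, by omega⟩ : Fin d))
          ((⟨d-1, by omega⟩ : Fin d), (⟨d-1, by omega⟩ : Fin d)) 1) := by
  have hZW : ((⟨0, by omega⟩ : Fin d), (⟨0, by omega⟩ : Fin d))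
      ≠ ((⟨d-1, by omega⟩ : Fin d), (⟨d-1, by omega⟩ : Fin d)) := by
    simp only [ne_eq, Prod.ext_iff, Fin.ext_iff]
    omega
  ext p q
  rw [gammaState_apply, gammaVec_eq hd p, gammaVec_eq hd q]
  by_cases h1 : p = ((⟨0, by omega⟩ : Fin d), (⟨0, by omega⟩ : Fin d)) <;>
    by_cases h2 : p = ((⟨d-1, by omega⟩ : Fin d), (⟨d-1, by omega⟩ : Fin d)) <;>
    by_cases h3 : q = ((⟨0, by omega⟩ : Fin d), (⟨0, by omega⟩ : Fin d)) <;>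
    by_cases h4 : q = ((⟨d-1, by omega⟩ : Fin d), (⟨d-1, by omega⟩ : Fin d)) <;>
    simp [h1, h2, h3, h4, Matrix.single, hZW, hZW.symm, inv_sqrt2_sq,
      inv_sqrt2_sq', Ne.symm, eq_comm]

lemma tensorMap_smul {A B A' B' : Type*} [Fintype A] [DecidableEq A] [Fintype B] [DecidableEq B]
    [Fintype A'] [Fintype B']
    (Φ1 : Matrix A A ℂ → Matrix A' A' ℂ) (Φ2 : Matrix B B ℂ → Matrix B' B' ℂ)
    (c : ℂ) (X : Matrix (A × B) (A × B) ℂ) :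
    tensorMap Φ1 Φ2 (c • X) = c • tensorMap Φ1 Φ2 X := by
  unfold tensorMap
  simp [Finset.smul_sum, smul_smul]

lemma tensorMap_add {A B A' B' : Type*} [Fintype A] [DecidableEq A] [Fintype B] [DecidableEq B]
    [Fintype A'] [Fintype B']
    (Φ1 : Matrix A A ℂ → Matrix A' A' ℂ) (Φ2 : Matrix B B ℂ → Matrix B' B' ℂ)
    (X Y : Matrix (A × B) (A × B) ℂ) :
    tensorMap Φ1 Φ2 (X + Y) = tensorMap Φ1 Φ2 X + tensorMap Φ1 Φ2 Y := by
  unfold tensorMap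
  simp [add_smul, Finset.sum_add_distrib]

lemma tensorMap_std {A B A' B' : Type*} [Fintype A] [DecidableEq A] [Fintype B] [DecidableEq B]
    [Fintype A'] [Fintype B']
    (Φ1 : Matrix A A ℂ → Matrix A' A' ℂ) (Φ2 : Matrix B B ℂ → Matrix B' B' ℂ)
    (a1 a2 : A) (c1 c2 : B) :
    tensorMap Φ1 Φ2 (Matrix.single (a1, c1) (a2, c2) 1) =
      Φ1 (Matrix.single a1 a2 1) ⊗ₖ Φ2 (Matrix.single c1 c2 1) := by
  unfold tensorMap
  simp [Matrix.single, Prod.ext_iff, ite_and, ite_smul]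

end Comp
end StmtAux


namespace StmtAux
open PaperEA

lemma depolM_apply {m : Type*} [Fintype m] [DecidableEq m] (q : ℝ) (X : Matrix m m ℂ) (x y : m) :
    depolM q X x y = (q:ℂ) * X x y
      + ((1-q:ℝ):ℂ) * X.trace * (Fintype.card m : ℂ)⁻¹ * (if x = y then 1 else 0) := by
  by_cases h : x = y <;> simp [depolM, Matrix.one_apply, h] <;> ring

lemma trace_std {m : Type*} [Fintype m] [DecidableEq m] (i j : m) :
    (Matrix.single i j (1:ℂ)).trace = if i = j then 1 else 0 := by
  classical
  simp only [Matrix.trace, Matrix.diag, Matrix.single, Matrix.of_apply]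
  by_cases h : i = j
  · subst h
    simp
  · rw [if_neg h]
    apply Finset.sum_eq_zero
    intro k _
    rw [if_neg]
    rintro ⟨rfl, rfl⟩
    exact h rfl

lemma depolE {m : Type*} [Fintype m] [DecidableEq m] (q : ℝ) (i j x y : m) :
    depolM q (Matrix.single i j 1) x y =
      (q:ℂ) * (if i = x ∧ j = y then 1 else 0)
      + ((1-q:ℝ):ℂ) * (if i = j then 1 else 0) * (Fintype.card m : ℂ)⁻¹
        * (if x = y then 1 else 0) := by
  rw [depolM_apply, trace_std]
  simp [Matrix.single]

lemma ineqA (d q : ℝ) (hd : 2 ≤ d) (h1 : (1 + Real.sqrt 3)/(d + 1 + Real.sqrt 3) < q)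
    (h2 : q ≤ 1) : 2*(1-q)/d*(q+(1-q)/d) - q^2 < 0 := by
  set s := Real.sqrt 3 with hs
  have hs0 : 0 ≤ s := Real.sqrt_nonneg 3
  have hs2 : s^2 = 3 := Real.sq_sqrt (by norm_num)
  have hs1 : 1 ≤ s := by nlinarith
  have hd0 : (0:ℝ) < d := by linarith
  have hden : 0 < d + 1 + s := by linarith
  have hq' : 1 + s < q * (d + 1 + s) := (div_lt_iff₀ hden).mp h1
  have h3 : 0 < d*q - (1+s)*(1-q) := by nlinarith
  have h5 : 0 < d*q := by nlinarith
  have h6 : 0 < d*q + (s-1)*(1-q) := by nlinarith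
  have key : 2*q*(1-q)*d + 2*(1-q)^2 - q^2*d^2 < 0 := by nlinarith [mul_pos h3 h6]
  have e : 2*(1-q)/d*(q+(1-q)/d) - q^2 = (2*q*(1-q)*d + 2*(1-q)^2 - q^2*d^2)/d^2 := by
    field_simp
  rw [e]
  exact div_neg_of_neg_of_pos key (by positivity)

lemma ineqB (d q : ℝ) (hd : 2 ≤ d) (h1 : 2/(d^2+2) < q) :
    (1-q)*2/(d*d) - q < 0 := by
  have hd0 : (0:ℝ) < d := by linarith
  have hden : (0:ℝ) < d^2+2 := by positivity
  have hq' : 2 < q*(d^2+2) := (div_lt_iff₀ hden).mp h1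
  have key : (1-q)*2 - q*(d*d) < 0 := by nlinarith
  have e : (1-q)*2/(d*d) - q = ((1-q)*2 - q*(d*d))/(d*d) := by field_simp
  rw [e]
  exact div_neg_of_neg_of_pos key (by positivity)

end StmtAux

/-- for `|γ⟩ = (|1⟩⊗|1⟩ + |d⟩⊗|d⟩)/√2`, the state
`(Φ_q ⊗ Φ_q)[|γ⟩⟨γ|]` has non-PSD partial transpose (hence is not separable) whenever
`q > (1+√3)/(d+1+√3)`, and the state `Φ_q^{global}[|γ⟩⟨γ|]` has non-PSD partial
transpose (hence is not separable) whenever `q > 2/(d²+2)`. -/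
theorem stmt_19 (d : ℕ) (hd : 2 ≤ d) :
    (∀ q : ℝ, q ∈ Set.Ioc ((1 + Real.sqrt 3) / ((d : ℝ) + 1 + Real.sqrt 3)) 1 →
      ¬ (ptrans1 (tensorMap (depolM (m := Fin d) q) (depolM (m := Fin d) q)
          (gammaState d))).PosSemidef ∧
      ¬ Sep (tensorMap (depolM (m := Fin d) q) (depolM (m := Fin d) q)
          (gammaState d))) ∧
    (∀ q : ℝ, q ∈ Set.Ioc (2 / ((d : ℝ) ^ 2 + 2)) 1 →
      ¬ (ptrans1 (depolM (m := Fin d × Fin d) q (gammaState d))).PosSemidef ∧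
      ¬ Sep (depolM (m := Fin d × Fin d) q (gammaState d))) := by
  have hz : (⟨0, by omega⟩ : Fin d) ≠ (⟨d-1, by omega⟩ : Fin d) := by
    simp only [ne_eq, Fin.ext_iff]
    omega
  constructor
  · -- local depolarizing
    intro q hq
    obtain ⟨hq1, hq2⟩ := hq
    have hM : tensorMap (depolM (m := Fin d) q) (depolM (m := Fin d) q) (gammaState d)
        = (2:ℂ)⁻¹ • (
          (depolM q (Matrix.single (⟨0, by omega⟩ : Fin d) (⟨0, by omega⟩ : Fin d) 1)
            ⊗ₖ depolM q (Matrix.single (⟨0, by omega⟩ : Fin d) (⟨0, by omega⟩ : Fin d) 1))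
          + (depolM q (Matrix.single (⟨0, by omega⟩ : Fin d) (⟨d-1, by omega⟩ : Fin d) 1)
            ⊗ₖ depolM q (Matrix.single (⟨0, by omega⟩ : Fin d) (⟨d-1, by omega⟩ : Fin d) 1))
          + (depolM q (Matrix.single (⟨d-1, by omega⟩ : Fin d) (⟨0, by omega⟩ : Fin d) 1)
            ⊗ₖ depolM q (Matrix.single (⟨d-1, by omega⟩ : Fin d) (⟨0, by omega⟩ : Fin d) 1))
          + (depolM q (Matrix.single (⟨d-1, by omega⟩ : Fin d) (⟨d-1, by omega⟩ : Fin d) 1)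
            ⊗ₖ depolM q (Matrix.single (⟨d-1, by omega⟩ : Fin d) (⟨d-1, by omega⟩ : Fin d) 1))) := by
      rw [StmtAux.gammaState_eq hd, StmtAux.tensorMap_smul, StmtAux.tensorMap_add,
        StmtAux.tensorMap_add, StmtAux.tensorMap_add]
      simp only [StmtAux.tensorMap_std]
    have hnot : ¬ (ptrans1 (tensorMap (depolM (m := Fin d) q) (depolM (m := Fin d) q)
        (gammaState d))).PosSemidef := by
      apply StmtAux.quad_neg _ ((⟨d-1, by omega⟩ : Fin d), (⟨0, by omega⟩ : Fin d))
        ((⟨0, by omega⟩ : Fin d), (⟨d-1, by omega⟩ : Fin d))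
      have hval : ptrans1 (tensorMap (depolM (m := Fin d) q) (depolM (m := Fin d) q)
            (gammaState d)) ((⟨d-1, by omega⟩ : Fin d), (⟨0, by omega⟩ : Fin d))
              ((⟨d-1, by omega⟩ : Fin d), (⟨0, by omega⟩ : Fin d))
          + ptrans1 (tensorMap (depolM (m := Fin d) q) (depolM (m := Fin d) q)
            (gammaState d)) ((⟨0, by omega⟩ : Fin d), (⟨d-1, by omega⟩ : Fin d))
              ((⟨0, by omega⟩ : Fin d), (⟨d-1, by omega⟩ : Fin d))
          - ptrans1 (tensorMap (depolM (m := Fin d) q) (depolM (m := Fin d) q)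
            (gammaState d)) ((⟨d-1, by omega⟩ : Fin d), (⟨0, by omega⟩ : Fin d))
              ((⟨0, by omega⟩ : Fin d), (⟨d-1, by omega⟩ : Fin d))
          - ptrans1 (tensorMap (depolM (m := Fin d) q) (depolM (m := Fin d) q)
            (gammaState d)) ((⟨0, by omega⟩ : Fin d), (⟨d-1, by omega⟩ : Fin d))
              ((⟨d-1, by omega⟩ : Fin d), (⟨0, by omega⟩ : Fin d))
          = ((2*(1-q)/(d:ℝ)*(q+(1-q)/(d:ℝ)) - q^2 : ℝ) : ℂ) := by
        simp only [ptrans1, hM, Matrix.smul_apply, Matrix.add_apply,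
          Matrix.kroneckerMap_apply, StmtAux.depolE, Fintype.card_fin, smul_eq_mul]
        simp only [hz, hz.symm, if_true, if_false, and_true, true_and, and_false, false_and,
          eq_self_iff_true, if_neg, not_false_iff]
        have hdne : ((d:ℝ):ℂ) ≠ 0 := by
          simp only [ne_eq, Complex.ofReal_natCast, Nat.cast_eq_zero]
          omega
        push_cast
        field_simp
        ring
      rw [hval, Complex.zero_le_real, not_le]
      exact StmtAux.ineqA d q (by exact_mod_cast Nat.ofNat_le_cast.mpr hd) hq1 hq2
    exact ⟨hnot, fun hsep => hnot (StmtAux.sep_ptrans1 hsep)⟩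
  · -- global depolarizing
    intro q hq
    obtain ⟨hq1, hq2⟩ := hq
    have hnot : ¬ (ptrans1 (depolM (m := Fin d × Fin d) q (gammaState d))).PosSemidef := by
      apply StmtAux.quad_neg _ ((⟨d-1, by omega⟩ : Fin d), (⟨0, by omega⟩ : Fin d))
        ((⟨0, by omega⟩ : Fin d), (⟨d-1, by omega⟩ : Fin d))
      have hval : ptrans1 (depolM (m := Fin d × Fin d) q (gammaState d))
            ((⟨d-1, by omega⟩ : Fin d), (⟨0, by omega⟩ : Fin d))
            ((⟨d-1, by omega⟩ : Fin d), (⟨0, by omega⟩ : Fin d))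
          + ptrans1 (depolM (m := Fin d × Fin d) q (gammaState d))
            ((⟨0, by omega⟩ : Fin d), (⟨d-1, by omega⟩ : Fin d))
            ((⟨0, by omega⟩ : Fin d), (⟨d-1, by omega⟩ : Fin d))
          - ptrans1 (depolM (m := Fin d × Fin d) q (gammaState d))
            ((⟨d-1, by omega⟩ : Fin d), (⟨0, by omega⟩ : Fin d))
            ((⟨0, by omega⟩ : Fin d), (⟨d-1, by omega⟩ : Fin d))
          - ptrans1 (depolM (m := Fin d × Fin d) q (gammaState d))
            ((⟨0, by omega⟩ : Fin d), (⟨d-1, by omega⟩ : Fin d))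
            ((⟨d-1, by omega⟩ : Fin d), (⟨0, by omega⟩ : Fin d))
          = (((1-q)*2/((d:ℝ)*(d:ℝ)) - q : ℝ) : ℂ) := by
        simp only [ptrans1, StmtAux.depolM_apply, StmtAux.gammaState_trace hd,
          StmtAux.gammaState_apply, StmtAux.gammaVec_eq hd, Fintype.card_prod, Fintype.card_fin]
        simp only [Prod.mk.injEq, Fin.mk.injEq, hz, hz.symm]
        have h1 : ¬ ((0:ℕ) = d - 1) := by omega
        have h2 : ¬ (d - 1 = (0:ℕ)) := by omega
        simp only [h1, h2, and_false, false_and, and_true, true_and, and_self, false_or, or_false,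
          or_self, if_false, if_true, eq_self_iff_true, not_false_iff, StmtAux.inv_sqrt2_sq]
        push_cast
        field_simp
        ring
      rw [hval, Complex.zero_le_real, not_le]
      apply StmtAux.ineqB d q (by exact_mod_cast Nat.ofNat_le_cast.mpr hd)
      exact_mod_cast hq1
    exact ⟨hnot, fun hsep => hnot (StmtAux.sep_ptrans1 hsep)⟩
end
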